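/- Let ρ be a density matrix on ℂ^d and let Ψ and Φ be quantum channels on ℂ^d with Kraus operators {L_i}_{i=1}^m and {K_j}_{j=1}^n respectively. Then Q_ρ(Ψ)·Q_ρ(Φ) ≥ (1/4) Σ_{i,j} |tr([L_i, K_j†] ρ)|², where [A,B] = AB − BA. -/

import Mathlib

open Matrix
open scoped ComplexOrder

noncomputable section

/-- The positive semidefinite square root of a positive semidefinite matrix
(the Mathlib definition of December 2024, removed since). -/
def Matrix.PosSemidef.sqrt {n : Type*} [Fintype n] [DecidableEq n] {A : Matrix n n ℂ}
    (hA : A.PosSemidef) : Matrix n n ℂ :=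
  hA.1.eigenvectorUnitary.1 * diagonal ((↑) ∘ (√·) ∘ hA.1.eigenvalues) *
  (star hA.1.eigenvectorUnitary : Matrix n n ℂ)

lemma psd_sqrt_herm {d : ℕ} {A : Matrix (Fin d) (Fin d) ℂ} (hA : A.PosSemidef) :
    hA.sqrtᴴ = hA.sqrt := by
  unfold Matrix.PosSemidef.sqrt
  simp [conjTranspose_mul, Matrix.mul_assoc, diagonal_conjTranspose]
  have hf : star (Complex.ofReal ∘ (fun x => √x) ∘ hA.1.eigenvalues) =
      Complex.ofReal ∘ (fun x => √x) ∘ hA.1.eigenvalues := by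
    funext i; simp
  rw [hf, Matrix.star_eq_conjTranspose, conjTranspose_conjTranspose]

lemma psd_sqrt_mul_self {d : ℕ} {A : Matrix (Fin d) (Fin d) ℂ} (hA : A.PosSemidef) :
    hA.sqrt * hA.sqrt = A := by
  have hU : (star hA.1.eigenvectorUnitary : Matrix (Fin d) (Fin d) ℂ) *
      (hA.1.eigenvectorUnitary : Matrix (Fin d) (Fin d) ℂ) = 1 := Unitary.coe_star_mul_self _
  conv_rhs => rw [hA.1.spectral_theorem, Unitary.conjStarAlgAut_apply]
  unfold Matrix.PosSemidef.sqrt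
  simp only [Matrix.mul_assoc]
  rw [← Matrix.mul_assoc (star _ : Matrix (Fin d) (Fin d) ℂ) _ (diagonal _ * _), hU,
    Matrix.one_mul, ← Matrix.mul_assoc (diagonal _) (diagonal _), diagonal_mul_diagonal]
  congr 3
  funext i
  simp only [Function.comp_apply]
  rw [← Complex.ofReal_mul, Real.mul_self_sqrt (hA.eigenvalues_nonneg i)]
  rfl

/-- Variance of an operator `K` with respect to a state `ρ`:
`V_ρ(K) = ½ tr((K†K + KK†)ρ) − |tr(Kρ)|²`. -/
def opVar {d : ℕ} (ρ K : Matrix (Fin d) (Fin d) ℂ) : ℝ :=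
  (((Kᴴ * K + K * Kᴴ) * ρ).trace).re / 2 - ‖(K * ρ).trace‖ ^ 2

/-- Variance of a channel with Kraus operators `K i`: `V_ρ(Φ) = Σ_i V_ρ(K_i)`. -/
def chanVar {d n : ℕ} (ρ : Matrix (Fin d) (Fin d) ℂ)
    (K : Fin n → Matrix (Fin d) (Fin d) ℂ) : ℝ :=
  ∑ i, opVar ρ (K i)

/-- Wigner–Yanase skew information of a channel with Kraus operators `K i`:
`I_ρ(Φ) = ½ Σ_i ‖[√ρ, K_i]‖_F²`, where `√ρ` is the PSD square root of `ρ`. -/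
def chanSkew {d n : ℕ} (ρ : Matrix (Fin d) (Fin d) ℂ) (hρ : ρ.PosSemidef)
    (K : Fin n → Matrix (Fin d) (Fin d) ℂ) : ℝ :=
  (1 / 2) * ∑ i,
    (((hρ.sqrt * K i - K i * hρ.sqrt)ᴴ * (hρ.sqrt * K i - K i * hρ.sqrt)).trace).re

/-- Quantum uncertainty of a channel:
`Q_ρ(Φ) = √(V_ρ(Φ)² − (V_ρ(Φ) − I_ρ(Φ))²)`. -/
def chanQ {d n : ℕ} (ρ : Matrix (Fin d) (Fin d) ℂ) (hρ : ρ.PosSemidef)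
    (K : Fin n → Matrix (Fin d) (Fin d) ℂ) : ℝ :=
  Real.sqrt ((chanVar ρ K) ^ 2 - (chanVar ρ K - chanSkew ρ hρ K) ^ 2)

/-! ### Auxiliary machinery -/

/-- Squared Frobenius norm of a complex matrix, as the real part of `tr(XᴴX)`. -/
def n2 {d : ℕ} (X : Matrix (Fin d) (Fin d) ℂ) : ℝ := ((Xᴴ * X).trace).re

lemma toE_inner {d : ℕ} (X Y : Matrix (Fin d) (Fin d) ℂ) :
    (inner ℂ ((WithLp.equiv 2 ((Fin d) × (Fin d) → ℂ)).symm fun p => X p.1 p.2)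
      ((WithLp.equiv 2 ((Fin d) × (Fin d) → ℂ)).symm fun p => Y p.1 p.2) : ℂ)
    = (Xᴴ * Y).trace := by
  simp only [PiLp.inner_apply, RCLike.inner_apply, Matrix.trace, Matrix.diag, Matrix.mul_apply,
    Matrix.conjTranspose_apply, Fintype.sum_prod_type, WithLp.equiv_symm_apply, PiLp.toLp_apply]
  rw [Finset.sum_comm]
  exact Finset.sum_congr rfl fun _ _ => Finset.sum_congr rfl fun _ _ => mul_comm _ _

lemma n2_eq {d : ℕ} (X : Matrix (Fin d) (Fin d) ℂ) :
    n2 X = ‖((WithLp.equiv 2 ((Fin d) × (Fin d) → ℂ)).symm fun p => X p.1 p.2)‖ ^ 2 := by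
  rw [@norm_sq_eq_re_inner ℂ, toE_inner]; rfl

lemma n2_nonneg {d : ℕ} (X : Matrix (Fin d) (Fin d) ℂ) : 0 ≤ n2 X := by
  rw [n2_eq]; positivity

/-- Cauchy–Schwarz for the Frobenius inner product. -/
lemma cs_trace {d : ℕ} (X Y : Matrix (Fin d) (Fin d) ℂ) :
    ‖(Xᴴ * Y).trace‖ ≤ Real.sqrt (n2 X) * Real.sqrt (n2 Y) := by
  rw [← toE_inner]
  calc ‖_‖ ≤ _ := norm_inner_le_norm _ _
  _ = _ := by
      rw [n2_eq, n2_eq, Real.sqrt_sq (norm_nonneg _), Real.sqrt_sq (norm_nonneg _)]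

lemma trace_quad {d : ℕ} (s ρ M : Matrix (Fin d) (Fin d) ℂ) (hs : sᴴ = s) (hss : s * s = ρ)
    (htr : ρ.trace = 1) :
    ((s*M - M*s)ᴴ * (s*M - M*s)).trace
      + ((s*M + M*s - (2*(M*ρ).trace) • s)ᴴ * (s*M + M*s - (2*(M*ρ).trace) • s)).trace
    = 2 * ((Mᴴ*M + M*Mᴴ) * ρ).trace - 4 * ((M*ρ).trace * (starRingEnd ℂ) ((M*ρ).trace)) := by
  have hρh : ρᴴ = ρ := by rw [← hss]; simp [conjTranspose_mul, hs]
  set t := (M*ρ).trace with ht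
  have hconj : (Mᴴ*ρ).trace = (starRingEnd ℂ) t := by
    have h := Matrix.trace_conjTranspose (M*ρ)
    rw [conjTranspose_mul, hρh, trace_mul_comm] at h
    rw [h]; rfl
  have f1 : (Mᴴ*(s*(s*M))).trace = (M*(Mᴴ*ρ)).trace := by
    rw [← hss, show Mᴴ*(s*(s*M)) = (Mᴴ*(s*s))*M by simp [mul_assoc], trace_mul_comm]
  have f2 : (s*(Mᴴ*(M*s))).trace = (Mᴴ*(M*ρ)).trace := by
    rw [← hss, trace_mul_comm]; simp [mul_assoc]
  have f3 : (Mᴴ*(s*(M*s))).trace = (s*(Mᴴ*(s*M))).trace := by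
    rw [show Mᴴ*(s*(M*s)) = (Mᴴ*(s*M))*s by simp [mul_assoc], trace_mul_comm]
  have f4 : (Mᴴ*(s*s)).trace = (starRingEnd ℂ) t := by rw [← mul_assoc, mul_assoc, hss, hconj]
  have f5 : (s*(Mᴴ*s)).trace = (starRingEnd ℂ) t := by
    rw [trace_mul_comm, mul_assoc, hss, hconj]
  have f6 : (s*(s*M)).trace = t := by rw [← mul_assoc, hss, trace_mul_comm]
  have f7 : (s*(M*s)).trace = t := by rw [trace_mul_comm, mul_assoc, hss]
  have f8 : (s*s).trace = 1 := by rw [hss, htr]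
  simp only [conjTranspose_sub, conjTranspose_add, conjTranspose_mul, conjTranspose_smul, hs,
    sub_mul, mul_sub, add_mul, mul_add, smul_mul_assoc, mul_smul_comm, trace_add, trace_sub,
    trace_smul, mul_assoc, smul_smul, smul_eq_mul, _root_.map_mul, Complex.star_def, map_ofNat]
  rw [f1, f2, f3, f4, f5, f6, f7, f8]
  ring

lemma comm_id1 {d : ℕ} (s ρ L K : Matrix (Fin d) (Fin d) ℂ) (hs : sᴴ = s) (hss : s * s = ρ) :
    ((L*Kᴴ - Kᴴ*L) * ρ).trace
      = ((s*K - K*s)ᴴ * (s*L + L*s - (2*(L*ρ).trace) • s)).trace := by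
  have g1 : (Kᴴ*(s*(s*L))).trace = (L*(Kᴴ*ρ)).trace := by
    rw [← hss, show Kᴴ*(s*(s*L)) = (Kᴴ*(s*s))*L by simp [mul_assoc], trace_mul_comm]
  have g2 : (Kᴴ*(s*(L*s))).trace = (s*(Kᴴ*(s*L))).trace := by
    rw [show Kᴴ*(s*(L*s)) = (Kᴴ*(s*L))*s by simp [mul_assoc], trace_mul_comm]
  have g3 : (s*(Kᴴ*(L*s))).trace = (Kᴴ*(L*ρ)).trace := by
    rw [← hss, trace_mul_comm]; simp [mul_assoc]
  have g4 : (Kᴴ*(s*s)).trace = (s*(Kᴴ*s)).trace := by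
    rw [show Kᴴ*(s*s) = (Kᴴ*s)*s by simp [mul_assoc], trace_mul_comm]
  simp only [conjTranspose_sub, conjTranspose_add, conjTranspose_mul, conjTranspose_smul, hs,
    sub_mul, mul_sub, add_mul, mul_add, smul_mul_assoc, mul_smul_comm, trace_add, trace_sub,
    trace_smul, mul_assoc, smul_smul, smul_eq_mul, _root_.map_mul, Complex.star_def, map_ofNat]
  rw [g1, g2, g3, g4]
  ring

lemma comm_id2 {d : ℕ} (s ρ L K : Matrix (Fin d) (Fin d) ℂ) (hs : sᴴ = s) (hss : s * s = ρ) :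
    ((L*Kᴴ - Kᴴ*L) * ρ).trace
      = ((s*K + K*s - (2*(K*ρ).trace) • s)ᴴ * (s*L - L*s)).trace := by
  have g1 : (Kᴴ*(s*(s*L))).trace = (L*(Kᴴ*ρ)).trace := by
    rw [← hss, show Kᴴ*(s*(s*L)) = (Kᴴ*(s*s))*L by simp [mul_assoc], trace_mul_comm]
  have g2 : (Kᴴ*(s*(L*s))).trace = (s*(Kᴴ*(s*L))).trace := by
    rw [show Kᴴ*(s*(L*s)) = (Kᴴ*(s*L))*s by simp [mul_assoc], trace_mul_comm]
  have g3 : (s*(Kᴴ*(L*s))).trace = (Kᴴ*(L*ρ)).trace := by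
    rw [← hss, trace_mul_comm]; simp [mul_assoc]
  have g6 : (s*(s*L)).trace = (s*(L*s)).trace := by
    rw [show s*(L*s) = (s*L)*s by simp [mul_assoc], trace_mul_comm, mul_assoc]
  simp only [conjTranspose_sub, conjTranspose_add, conjTranspose_mul, conjTranspose_smul, hs,
    sub_mul, mul_sub, add_mul, mul_add, smul_mul_assoc, mul_smul_comm, trace_add, trace_sub,
    trace_smul, mul_assoc, smul_smul, smul_eq_mul, _root_.map_mul, Complex.star_def, map_ofNat]
  rw [g1, g2, g3, g6]
  ring

lemma opVar_id {d : ℕ} (s ρ M : Matrix (Fin d) (Fin d) ℂ) (hs : sᴴ = s) (hss : s * s = ρ)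
    (htr : ρ.trace = 1) :
    n2 (s*M - M*s) + n2 (s*M + M*s - (2*(M*ρ).trace) • s) = 4 * opVar ρ M := by
  have h := congrArg Complex.re (trace_quad s ρ M hs hss htr)
  rw [Complex.add_re] at h
  unfold n2 opVar
  rw [h, Complex.mul_conj]
  rw [Complex.sub_re]
  simp [Complex.sq_norm]
  ring

set_option maxHeartbeats 1000000 in
lemma chanQ_eq {d n : ℕ} (ρ : Matrix (Fin d) (Fin d) ℂ) (hρ : ρ.PosSemidef)
    (htr : ρ.trace = 1) (K : Fin n → Matrix (Fin d) (Fin d) ℂ) :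
    chanQ ρ hρ K =
      Real.sqrt (∑ i, n2 (hρ.sqrt * K i - K i * hρ.sqrt)) *
        Real.sqrt (∑ i, n2 (hρ.sqrt * K i + K i * hρ.sqrt - (2*(K i*ρ).trace) • hρ.sqrt)) / 2 := by
  set s := hρ.sqrt with hsdef
  have hs : sᴴ = s := psd_sqrt_herm hρ
  have hss : s * s = ρ := psd_sqrt_mul_self hρ
  set a := ∑ i, n2 (s * K i - K i * s) with ha
  set b := ∑ i, n2 (s * K i + K i * s - (2*(K i*ρ).trace) • s) with hb
  have ha0 : 0 ≤ a := Finset.sum_nonneg fun i _ => n2_nonneg _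
  have hb0 : 0 ≤ b := Finset.sum_nonneg fun i _ => n2_nonneg _
  have hskew : chanSkew ρ hρ K = a / 2 := by
    rw [chanSkew, ha]; unfold n2; rw [← hsdef]; ring
  have hvar : 4 * chanVar ρ K = a + b := by
    rw [chanVar, Finset.mul_sum, ha, hb, ← Finset.sum_add_distrib]
    exact Finset.sum_congr rfl fun i _ => (opVar_id s ρ (K i) hs hss htr).symm
  have hv : chanVar ρ K = (a+b)/4 := by linarith
  have hsq : (Real.sqrt a * Real.sqrt b / 2)^2 = a*b/4 := by
    rw [div_pow, mul_pow, Real.sq_sqrt ha0, Real.sq_sqrt hb0]; norm_num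
  rw [chanQ, hv, hskew, show ((a+b)/4)^2 - ((a+b)/4 - a/2)^2
      = (Real.sqrt a * Real.sqrt b / 2)^2 from by rw [hsq]; ring]
  exact Real.sqrt_sq (by positivity)

set_option maxHeartbeats 1000000 in
/-- Product-form uncertainty relation for two quantum channels (Theorem 1):
`Q_ρ(Ψ) Q_ρ(Φ) ≥ ¼ Σ_{i,j} |tr([L_i, K_j†] ρ)|²`. -/
theorem stmt_0 {d m n : ℕ}
    (ρ : Matrix (Fin d) (Fin d) ℂ) (hρ : ρ.PosSemidef) (htr : ρ.trace = 1)
    (L : Fin m → Matrix (Fin d) (Fin d) ℂ) (hL : ∑ i, (L i)ᴴ * L i = 1)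
    (K : Fin n → Matrix (Fin d) (Fin d) ℂ) (hK : ∑ j, (K j)ᴴ * K j = 1) :
    chanQ ρ hρ L * chanQ ρ hρ K ≥
      (1 / 4) * ∑ i, ∑ j,
        ‖((L i * (K j)ᴴ - (K j)ᴴ * L i) * ρ).trace‖ ^ 2 := by
  have hs : (hρ.sqrt)ᴴ = hρ.sqrt := psd_sqrt_herm hρ
  have hss : hρ.sqrt * hρ.sqrt = ρ := psd_sqrt_mul_self hρ
  set s := hρ.sqrt with hsdef
  have key : ∀ (i : Fin m) (j : Fin n),
      ‖((L i * (K j)ᴴ - (K j)ᴴ * L i) * ρ).trace‖ ^ 2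
      ≤ (Real.sqrt (n2 (s * L i - L i * s)) *
          Real.sqrt (n2 (s * L i + L i * s - (2*(L i*ρ).trace) • s))) *
        (Real.sqrt (n2 (s * K j - K j * s)) *
          Real.sqrt (n2 (s * K j + K j * s - (2*(K j*ρ).trace) • s))) := by
    intro i j
    have h1 : ‖((L i * (K j)ᴴ - (K j)ᴴ * L i) * ρ).trace‖
        ≤ Real.sqrt (n2 (s * K j - K j * s)) *
          Real.sqrt (n2 (s * L i + L i * s - (2*(L i*ρ).trace) • s)) := by
      rw [comm_id1 s ρ (L i) (K j) hs hss]; exact cs_trace _ _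
    have h2 : ‖((L i * (K j)ᴴ - (K j)ᴴ * L i) * ρ).trace‖
        ≤ Real.sqrt (n2 (s * K j + K j * s - (2*(K j*ρ).trace) • s)) *
          Real.sqrt (n2 (s * L i - L i * s)) := by
      rw [comm_id2 s ρ (L i) (K j) hs hss]; exact cs_trace _ _
    calc ‖((L i * (K j)ᴴ - (K j)ᴴ * L i) * ρ).trace‖ ^ 2
        = ‖((L i * (K j)ᴴ - (K j)ᴴ * L i) * ρ).trace‖ *
          ‖((L i * (K j)ᴴ - (K j)ᴴ * L i) * ρ).trace‖ := sq _
      _ ≤ (Real.sqrt (n2 (s * K j - K j * s)) *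
          Real.sqrt (n2 (s * L i + L i * s - (2*(L i*ρ).trace) • s))) *
          (Real.sqrt (n2 (s * K j + K j * s - (2*(K j*ρ).trace) • s)) *
          Real.sqrt (n2 (s * L i - L i * s))) :=
        mul_le_mul h1 h2 (norm_nonneg _) (by positivity)
      _ = _ := by ring
  have sum_le : ∑ i, ∑ j, ‖((L i * (K j)ᴴ - (K j)ᴴ * L i) * ρ).trace‖ ^ 2
      ≤ (∑ i, Real.sqrt (n2 (s * L i - L i * s)) *
          Real.sqrt (n2 (s * L i + L i * s - (2*(L i*ρ).trace) • s))) *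
        (∑ j, Real.sqrt (n2 (s * K j - K j * s)) *
          Real.sqrt (n2 (s * K j + K j * s - (2*(K j*ρ).trace) • s))) := by
    rw [Finset.sum_mul_sum]
    exact Finset.sum_le_sum fun i _ => Finset.sum_le_sum fun j _ => key i j
  have cs1 := Real.sum_sqrt_mul_sqrt_le (f := fun i => n2 (s * L i - L i * s))
    (g := fun i => n2 (s * L i + L i * s - (2*(L i*ρ).trace) • s)) Finset.univ
    (fun i => n2_nonneg _) (fun i => n2_nonneg _)
  have cs2 := Real.sum_sqrt_mul_sqrt_le (f := fun j => n2 (s * K j - K j * s))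
    (g := fun j => n2 (s * K j + K j * s - (2*(K j*ρ).trace) • s)) Finset.univ
    (fun j => n2_nonneg _) (fun j => n2_nonneg _)
  have hQL := chanQ_eq ρ hρ htr L
  have hQK := chanQ_eq ρ hρ htr K
  rw [ge_iff_le, ← hsdef] at *
  calc (1 / 4 : ℝ) * ∑ i, ∑ j, ‖((L i * (K j)ᴴ - (K j)ᴴ * L i) * ρ).trace‖ ^ 2
      ≤ (1/4) * ((∑ i, Real.sqrt (n2 (s * L i - L i * s)) *
          Real.sqrt (n2 (s * L i + L i * s - (2*(L i*ρ).trace) • s))) *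
        (∑ j, Real.sqrt (n2 (s * K j - K j * s)) *
          Real.sqrt (n2 (s * K j + K j * s - (2*(K j*ρ).trace) • s)))) := by
        apply mul_le_mul_of_nonneg_left sum_le (by norm_num)
    _ ≤ (1/4) * ((Real.sqrt (∑ i, n2 (s * L i - L i * s)) *
          Real.sqrt (∑ i, n2 (s * L i + L i * s - (2*(L i*ρ).trace) • s))) *
        (Real.sqrt (∑ j, n2 (s * K j - K j * s)) *
          Real.sqrt (∑ j, n2 (s * K j + K j * s - (2*(K j*ρ).trace) • s)))) := by
        apply mul_le_mul_of_nonneg_left _ (by norm_num)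
        exact mul_le_mul cs1 cs2
          (Finset.sum_nonneg fun j _ => by positivity) (by positivity)
    _ = chanQ ρ hρ L * chanQ ρ hρ K := by rw [hQL, hQK]; ring
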